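/- Let N ≥ 1 and K : Fin N → ℕ with K n ≥ 1 for all n. Let f : (n : Fin N) → Fin (K n) → ℝ be per-segment execution costs and let r give resharding costs r n : Fin (K n) → Fin (K (n+1)) → ℝ for each consecutive pair of segments n, n+1. Define Bellman values V recursively by V 0 j = f 0 j and V (n+1) j = f (n+1) j + min_{k ∈ Fin (K n)} (V n k + r n k j). Then min_{j ∈ Fin (K (N−1))} V (N−1) j = min over all tuples i ∈ Π (n : Fin N), Fin (K n) of T(i) = Σ_{n=0}^{N−1} f n (i n) + Σ_{n=0}^{N−2} r n (i n) (i (n+1)). That is, the dynamic programming recursion computes the minimum total execution cost over all global parallelism plans. -/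
import Mathlib

section DPaux
variable {N : ℕ} {K : Fin N → ℕ}
  (f : (n : Fin N) → Fin (K n) → ℝ)
  (r : (n : ℕ) → (h : n + 1 < N) →
    Fin (K ⟨n, Nat.lt_of_succ_lt h⟩) → Fin (K ⟨n + 1, h⟩) → ℝ)

/-- Prefix cost of a full plan up to segment `m`. -/
def DPcost : (m : ℕ) → m < N → (∀ n : Fin N, Fin (K n)) → ℝ
  | 0, hm, i => f ⟨0, hm⟩ (i ⟨0, hm⟩)
  | m + 1, hm, i =>
      DPcost m (Nat.lt_of_succ_lt hm) i + f ⟨m + 1, hm⟩ (i ⟨m + 1, hm⟩) +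
        r m hm (i ⟨m, Nat.lt_of_succ_lt hm⟩) (i ⟨m + 1, hm⟩)

lemma DPcost_congr : ∀ (m : ℕ) (hm : m < N) (i i' : ∀ n : Fin N, Fin (K n)),
    (∀ (n : ℕ) (hn : n < N), n ≤ m → i ⟨n, hn⟩ = i' ⟨n, hn⟩) →
    DPcost f r m hm i = DPcost f r m hm i'
  | 0, hm, i, i', h => by
      simp only [DPcost]; rw [h 0 hm (le_refl 0)]
  | m + 1, hm, i, i', h => by
      simp only [DPcost]
      rw [DPcost_congr m (Nat.lt_of_succ_lt hm) i i'
          (fun n hn hle => h n hn (by omega)),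
        h m (Nat.lt_of_succ_lt hm) (by omega), h (m + 1) hm (le_refl _)]

lemma DPcost_sum : ∀ (m : ℕ) (hm : m < N) (i : ∀ n : Fin N, Fin (K n)),
    DPcost f r m hm i =
      (∑ n : Fin (m + 1), f ⟨n.val, by have := n.isLt; omega⟩
          (i ⟨n.val, by have := n.isLt; omega⟩)) +
        ∑ n : Fin m, r n.val (by have := n.isLt; omega)
          (i ⟨n.val, by have := n.isLt; omega⟩)
          (i ⟨n.val + 1, by have := n.isLt; omega⟩)
  | 0, hm, i => by
      simp [DPcost]
  | m + 1, hm, i => by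
      simp only [DPcost, DPcost_sum m (Nat.lt_of_succ_lt hm) i,
        Fin.sum_univ_castSucc, Fin.coe_castSucc, Fin.val_last]
      ring

end DPaux

/-- The dynamic programming recursion over the sequence of `N` model segments
computes the minimum total execution cost over all global parallelism plans.
Segment `n` has plans `Fin (K n)` with profiled execution costs `f n`, and
`r n h` gives the cross-segment resharding cost between the plans of
consecutive segments `n` and `n+1`.  If the Bellman values `V` satisfy
`V 0 j = f 0 j` and
`V (n+1) j = f (n+1) j + min_k (V n k + r n k j)`, then
`min_j V (N-1) j` equals the minimum over all global plans
`i ∈ Π n, Fin (K n)` of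
`T(i) = ∑ n, f n (i n) + ∑ n, r n (i n) (i (n+1))`. -/
theorem bellman_dp_computes_min_total_cost
    (N : ℕ) (hN : 1 ≤ N) (K : Fin N → ℕ) (hK : ∀ n, 1 ≤ K n)
    (f : (n : Fin N) → Fin (K n) → ℝ)
    (r : (n : ℕ) → (h : n + 1 < N) →
      Fin (K ⟨n, Nat.lt_of_succ_lt h⟩) → Fin (K ⟨n + 1, h⟩) → ℝ)
    (V : (n : Fin N) → Fin (K n) → ℝ)
    (hV0 : ∀ j, V ⟨0, hN⟩ j = f ⟨0, hN⟩ j)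
    (hVs : ∀ (n : ℕ) (h : n + 1 < N) (j : Fin (K ⟨n + 1, h⟩)),
      V ⟨n + 1, h⟩ j = f ⟨n + 1, h⟩ j +
        Finset.univ.inf' ⟨⟨0, hK _⟩, Finset.mem_univ _⟩
          (fun k : Fin (K ⟨n, Nat.lt_of_succ_lt h⟩) =>
            V ⟨n, Nat.lt_of_succ_lt h⟩ k + r n h k j)) :
    Finset.univ.inf' ⟨⟨0, hK _⟩, Finset.mem_univ _⟩
        (V ⟨N - 1, by omega⟩) =
      Finset.univ.inf' ⟨fun n => ⟨0, hK n⟩, Finset.mem_univ _⟩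
        (fun i : ∀ n : Fin N, Fin (K n) =>
          (∑ n : Fin N, f n (i n)) +
            ∑ n : Fin (N - 1),
              r n.val (by have := n.isLt; omega)
                (i ⟨n.val, by have := n.isLt; omega⟩)
                (i ⟨n.val + 1, by have := n.isLt; omega⟩)) := by
  classical
  have base : ∀ n : Fin N, Fin (K n) := fun n => ⟨0, hK n⟩
  have hwit : ∀ (m : ℕ) (hm : m < N) (j : Fin (K ⟨m, hm⟩)),
      (Finset.univ.filter (fun i : ∀ n : Fin N, Fin (K n) => i ⟨m, hm⟩ = j)).Nonempty := by
    intro m hm j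
    exact ⟨Function.update base ⟨m, hm⟩ j,
      Finset.mem_filter.mpr ⟨Finset.mem_univ _, Function.update_self _ _ _⟩⟩
  have hV0' : ∀ (h0 : 0 < N) (j : Fin (K ⟨0, h0⟩)), V ⟨0, h0⟩ j = f ⟨0, h0⟩ j :=
    fun _ j => hV0 j
  -- main DP invariant
  have main : ∀ (m : ℕ) (hm : m < N) (j : Fin (K ⟨m, hm⟩)),
      V ⟨m, hm⟩ j =
        (Finset.univ.filter (fun i : ∀ n : Fin N, Fin (K n) => i ⟨m, hm⟩ = j)).inf'
          (hwit m hm j) (DPcost f r m hm) := by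
    intro m
    induction m with
    | zero =>
      intro hm j
      apply le_antisymm
      · apply Finset.le_inf'
        intro i hi
        rw [Finset.mem_filter] at hi
        rw [hV0' hm j, ← hi.2]
        exact le_of_eq rfl
      · obtain ⟨i, hi⟩ := hwit 0 hm j
        refine (Finset.inf'_le _ hi).trans_eq ?_
        rw [Finset.mem_filter] at hi
        show f ⟨0, hm⟩ (i ⟨0, hm⟩) = V ⟨0, hm⟩ j
        rw [hi.2, hV0' hm j]
    | succ m ih =>
      intro hm j
      have hm' : m < N := Nat.lt_of_succ_lt hm
      rw [hVs m hm j]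
      apply le_antisymm
      · apply Finset.le_inf'
        intro i hi
        rw [Finset.mem_filter] at hi
        have h1 : V ⟨m, hm'⟩ (i ⟨m, hm'⟩) ≤ DPcost f r m hm' i := by
          rw [ih hm' (i ⟨m, hm'⟩)]
          refine Finset.inf'_le _ ?_
          exact Finset.mem_filter.mpr ⟨Finset.mem_univ _, rfl⟩
        have h2 : Finset.univ.inf' ⟨⟨0, hK _⟩, Finset.mem_univ _⟩
            (fun k : Fin (K ⟨m, hm'⟩) => V ⟨m, hm'⟩ k + r m hm k j) ≤
            V ⟨m, hm'⟩ (i ⟨m, hm'⟩) + r m hm (i ⟨m, hm'⟩) j :=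
          Finset.inf'_le _ (Finset.mem_univ _)
        have h3 : DPcost f r (m + 1) hm i =
            DPcost f r m hm' i + f ⟨m + 1, hm⟩ (i ⟨m + 1, hm⟩) +
              r m hm (i ⟨m, hm'⟩) (i ⟨m + 1, hm⟩) := rfl
        rw [h3, hi.2]
        linarith [h1, h2]
      · obtain ⟨k, -, hk⟩ := Finset.exists_mem_eq_inf'
          (⟨⟨0, hK _⟩, Finset.mem_univ _⟩ :
            (Finset.univ : Finset (Fin (K ⟨m, hm'⟩))).Nonempty)
          (fun k : Fin (K ⟨m, hm'⟩) => V ⟨m, hm'⟩ k + r m hm k j)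
        rw [hk]
        obtain ⟨i, hi, hieq⟩ := Finset.exists_mem_eq_inf' (hwit m hm' k) (DPcost f r m hm')
        rw [Finset.mem_filter] at hi
        set i' := Function.update i ⟨m + 1, hm⟩ j with hi'def
        have hne : (⟨m, hm'⟩ : Fin N) ≠ ⟨m + 1, hm⟩ := by simp only [ne_eq, Fin.mk.injEq]; omega
        have hi'm : i' ⟨m, hm'⟩ = k := by
          rw [hi'def, Function.update_of_ne hne, hi.2]
        have hi'm1 : i' ⟨m + 1, hm⟩ = j := by
          rw [hi'def, Function.update_self]
        have hmem : i' ∈ Finset.univ.filter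
            (fun i : ∀ n : Fin N, Fin (K n) => i ⟨m + 1, hm⟩ = j) :=
          Finset.mem_filter.mpr ⟨Finset.mem_univ _, hi'm1⟩
        refine (Finset.inf'_le _ hmem).trans_eq ?_
        have h3 : DPcost f r (m + 1) hm i' =
            DPcost f r m hm' i' + f ⟨m + 1, hm⟩ (i' ⟨m + 1, hm⟩) +
              r m hm (i' ⟨m, hm'⟩) (i' ⟨m + 1, hm⟩) := rfl
        have hcost : DPcost f r m hm' i' = DPcost f r m hm' i := by
          apply DPcost_congr
          intro n hn hnm
          rw [hi'def, Function.update_of_ne (by simp only [ne_eq, Fin.mk.injEq]; omega)]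
        rw [h3, hi'm, hi'm1, hcost, ← hieq, ih hm' k]
        ring
  -- relating prefix cost at N-1 to the total cost
  have hlast : N - 1 < N := by omega
  have hT : ∀ i : ∀ n : Fin N, Fin (K n),
      DPcost f r (N - 1) hlast i =
        (∑ n : Fin N, f n (i n)) +
          ∑ n : Fin (N - 1),
            r n.val (by have := n.isLt; omega)
              (i ⟨n.val, by have := n.isLt; omega⟩)
              (i ⟨n.val + 1, by have := n.isLt; omega⟩) := by
    intro i
    rw [DPcost_sum]
    congr 1
    rw [← Fin.sum_congr' (fun n : Fin N => f n (i n)) (show N - 1 + 1 = N by omega)]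
    exact Finset.sum_congr rfl fun n _ => rfl
  apply le_antisymm
  · apply Finset.le_inf'
    intro i _
    have h1 : Finset.univ.inf' ⟨⟨0, hK _⟩, Finset.mem_univ _⟩ (V ⟨N - 1, hlast⟩) ≤
        V ⟨N - 1, hlast⟩ (i ⟨N - 1, hlast⟩) := Finset.inf'_le _ (Finset.mem_univ _)
    have hmem : i ∈ Finset.univ.filter
        (fun i' : ∀ n : Fin N, Fin (K n) => i' ⟨N - 1, hlast⟩ = i ⟨N - 1, hlast⟩) :=
      Finset.mem_filter.mpr ⟨Finset.mem_univ _, rfl⟩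
    exact ((h1.trans_eq (main (N - 1) hlast (i ⟨N - 1, hlast⟩))).trans
      (Finset.inf'_le (DPcost f r (N - 1) hlast) hmem)).trans_eq (hT i)
  · obtain ⟨j, -, hj⟩ := Finset.exists_mem_eq_inf'
      (⟨⟨0, hK _⟩, Finset.mem_univ _⟩ :
        (Finset.univ : Finset (Fin (K ⟨N - 1, hlast⟩))).Nonempty)
      (V ⟨N - 1, hlast⟩)
    obtain ⟨i, hi, hieq⟩ := Finset.exists_mem_eq_inf' (hwit (N - 1) hlast j)
      (DPcost f r (N - 1) hlast)
    refine le_trans (Finset.inf'_le _ (Finset.mem_univ i)) (le_of_eq ?_)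
    exact (hT i).symm.trans (hieq.symm.trans ((main (N - 1) hlast j).symm.trans hj.symm))
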